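/- Let λ ≠ 0 be a real number and define z : ℝ → ℂ² by z(u) = ( (λ/√(λ²+1))·e^{iu/λ}, (1/√(λ²+1))·e^{−iλu} ). Then for every u ∈ ℝ: ‖z(u)‖ = 1 and ⟨z′(u), i·z(u)⟩_ℝ = 0, i.e. z is a Legendre curve in the unit sphere S³ ⊂ ℂ². -/

import Mathlib

open scoped ComplexInnerProductSpace

/-- z(u) = ((λ/√(λ²+1))e^{iu/λ}, (1/√(λ²+1))e^{−iλu}) is a Legendre curve
in S³ ⊂ ℂ². -/
theorem stmt_13 (lam : ℝ) (hlam : lam ≠ 0)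
    (z : ℝ → EuclideanSpace ℂ (Fin 2))
    (hz : ∀ u : ℝ, z u = (WithLp.equiv 2 (Fin 2 → ℂ)).symm
      ![((lam/Real.sqrt (lam^2 + 1) : ℝ) : ℂ) * Complex.exp (Complex.I * ((u/lam : ℝ) : ℂ)),
        ((1/Real.sqrt (lam^2 + 1) : ℝ) : ℂ) * Complex.exp (-Complex.I * ((lam*u : ℝ) : ℂ))]) :
    ∀ u : ℝ, ‖z u‖ = 1 ∧ (⟪deriv z u, Complex.I • z u⟫).re = 0 := by
  have hpos : (0:ℝ) < lam^2 + 1 := by positivity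
  have hs : (0:ℝ) < Real.sqrt (lam^2 + 1) := Real.sqrt_pos.2 hpos
  have hs2 : Real.sqrt (lam^2 + 1) ^ 2 = lam^2 + 1 := Real.sq_sqrt hpos.le
  set a : ℝ := lam / Real.sqrt (lam^2 + 1) with ha
  set b : ℝ := 1 / Real.sqrt (lam^2 + 1) with hb
  have hzfun : z = fun u : ℝ => (WithLp.equiv 2 (Fin 2 → ℂ)).symm
      ![((a : ℝ) : ℂ) * Complex.exp (Complex.I * ((u/lam : ℝ) : ℂ)),
        ((b : ℝ) : ℂ) * Complex.exp (-Complex.I * ((lam*u : ℝ) : ℂ))] := funext hz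
  intro u
  -- derivative
  have hd1 : HasDerivAt (fun u : ℝ => ((a : ℝ) : ℂ) * Complex.exp (Complex.I * ((u/lam : ℝ) : ℂ)))
      ((a : ℂ) * (Complex.I / lam) * Complex.exp (Complex.I * ((u/lam : ℝ) : ℂ))) u := by
    have h1 : HasDerivAt (fun w : ℂ => (a : ℂ) * Complex.exp (Complex.I / lam * w))
        ((a : ℂ) * (Complex.exp (Complex.I / lam * u) * (Complex.I / lam))) (u : ℂ) := by
      simpa using (((hasDerivAt_id (u:ℂ)).const_mul (Complex.I / lam)).cexp).const_mul ((a:ℝ):ℂ)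
    have h2 := h1.comp_ofReal
    have heq : (fun u : ℝ => ((a : ℝ) : ℂ) * Complex.exp (Complex.I * ((u/lam : ℝ) : ℂ)))
        = fun u : ℝ => (a : ℂ) * Complex.exp (Complex.I / lam * u) := by
      funext v
      push_cast
      ring_nf
    rw [heq]
    convert h2 using 1
    push_cast
    ring
  have hd2 : HasDerivAt (fun u : ℝ => ((b : ℝ) : ℂ) * Complex.exp (-Complex.I * ((lam*u : ℝ) : ℂ)))
      ((b : ℂ) * (-Complex.I * lam) * Complex.exp (-Complex.I * ((lam*u : ℝ) : ℂ))) u := by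
    have h1 : HasDerivAt (fun w : ℂ => (b : ℂ) * Complex.exp (-Complex.I * lam * w))
        ((b : ℂ) * (Complex.exp (-Complex.I * lam * u) * (-Complex.I * lam))) (u : ℂ) := by
      simpa using (((hasDerivAt_id (u:ℂ)).const_mul (-Complex.I * lam)).cexp).const_mul ((b:ℝ):ℂ)
    have h2 := h1.comp_ofReal
    have heq : (fun u : ℝ => ((b : ℝ) : ℂ) * Complex.exp (-Complex.I * ((lam*u : ℝ) : ℂ)))
        = fun u : ℝ => (b : ℂ) * Complex.exp (-Complex.I * lam * u) := by
      funext v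
      push_cast
      ring_nf
    rw [heq]
    convert h2 using 1
    push_cast
    ring
  have hdp : HasDerivAt (fun u : ℝ =>
      (![((a : ℝ) : ℂ) * Complex.exp (Complex.I * ((u/lam : ℝ) : ℂ)),
         ((b : ℝ) : ℂ) * Complex.exp (-Complex.I * ((lam*u : ℝ) : ℂ))] : Fin 2 → ℂ))
      ![((a : ℂ) * (Complex.I / lam) * Complex.exp (Complex.I * ((u/lam : ℝ) : ℂ))),
        ((b : ℂ) * (-Complex.I * lam) * Complex.exp (-Complex.I * ((lam*u : ℝ) : ℂ)))] u := by
    rw [hasDerivAt_pi]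
    intro i
    fin_cases i
    · simpa using hd1
    · simpa using hd2
  have L := (PiLp.continuousLinearEquiv 2 ℝ (fun _ : Fin 2 => ℂ)).symm
  have hdz : HasDerivAt z ((WithLp.equiv 2 (Fin 2 → ℂ)).symm
      ![((a : ℂ) * (Complex.I / lam) * Complex.exp (Complex.I * ((u/lam : ℝ) : ℂ))),
        ((b : ℂ) * (-Complex.I * lam) * Complex.exp (-Complex.I * ((lam*u : ℝ) : ℂ)))]) u := by
    rw [hzfun]
    have := ((PiLp.continuousLinearEquiv 2 ℝ (fun _ : Fin 2 => ℂ)).symm.toContinuousLinearMap.hasFDerivAt.comp_hasDerivAt u hdp)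
    convert this using 2
    all_goals rfl
  have hE1 : (starRingEnd ℂ) (Complex.exp (Complex.I * ((u/lam : ℝ) : ℂ)))
      * Complex.exp (Complex.I * ((u/lam : ℝ) : ℂ)) = 1 := by
    rw [← Complex.exp_conj, ← Complex.exp_add]
    simp [Complex.conj_ofReal]
  have hE2 : (starRingEnd ℂ) (Complex.exp (-Complex.I * ((lam*u : ℝ) : ℂ)))
      * Complex.exp (-Complex.I * ((lam*u : ℝ) : ℂ)) = 1 := by
    rw [← Complex.exp_conj, ← Complex.exp_add]
    simp [Complex.conj_ofReal]
  have hab : ((a:ℂ)^2 / lam) = (b:ℂ)^2 * lam := by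
    have : (a:ℝ)^2 / lam = (b:ℝ)^2 * lam := by
      rw [ha, hb]
      field_simp
    exact_mod_cast congrArg (Complex.ofReal) this
  constructor
  · rw [hz u, EuclideanSpace.norm_eq]
    have h1 : ‖((a : ℝ) : ℂ) * Complex.exp (Complex.I * ((u/lam : ℝ) : ℂ))‖ = |a| := by
      rw [norm_mul, Complex.norm_exp]
      simp
    have h2 : ‖((b : ℝ) : ℂ) * Complex.exp (-Complex.I * ((lam*u : ℝ) : ℂ))‖ = |b| := by
      rw [norm_mul, Complex.norm_exp]
      simp
    rw [Fin.sum_univ_two]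
    simp only [WithLp.equiv_symm_apply, WithLp.ofLp_toLp, PiLp.toLp_apply, Matrix.cons_val_zero, Matrix.cons_val_one, Matrix.head_cons, h1, h2]
    rw [sq_abs, sq_abs, ha, hb, div_pow, div_pow, hs2, one_pow, ← add_div,
      div_self (ne_of_gt hpos)]
    exact Real.sqrt_one
  · have : (⟪deriv z u, Complex.I • z u⟫ : ℂ) = 0 := by
      rw [hdz.deriv, hz u]
      simp only [PiLp.inner_apply, RCLike.inner_apply, Fin.sum_univ_two,
        WithLp.equiv_symm_apply, WithLp.ofLp_toLp, PiLp.toLp_apply, PiLp.smul_apply, Matrix.cons_val_zero,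
        Matrix.cons_val_one, Matrix.head_cons, smul_eq_mul, map_mul, map_div₀,
        Complex.conj_I, Complex.conj_ofReal, map_neg, map_ofNat]
      linear_combination ((a:ℂ)^2/lam) * hE1 - ((b:ℂ)^2*lam) * hE2
        + hab
        + (-(a:ℂ)^2/lam * ((starRingEnd ℂ) (Complex.exp (Complex.I * ((u/lam : ℝ) : ℂ))) * Complex.exp (Complex.I * ((u/lam : ℝ) : ℂ))) + (b:ℂ)^2*lam*((starRingEnd ℂ) (Complex.exp (-Complex.I * ((lam*u : ℝ) : ℂ))) * Complex.exp (-Complex.I * ((lam*u : ℝ) : ℂ)))) * Complex.I_sq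
    rw [this]
    simp
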